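/- Let A be a unital associative ℝ-algebra with involution, let {p_λ}_{λ∈Λ} ⊆ A, and let I be the left ideal of A generated by {p_λ}. Set S = {p_λ* p_λ : λ ∈ Λ}, let cone(S) be the set of finite sums of nonnegative real multiples of elements of S, and let Σ_I be the set of finite sums of u*u with u ∈ I. Then: (1) Σ_A − cone(S) ⊆ Σ_A − Σ_I ⊆ Σ_A + (I ∩ A_h) ⊆ (Σ_A + I + I*) ∩ A_h; and (2) every ℝ-linear functional f : A → ℝ with f(b*) = f(b) for all b ∈ A and f ≥ 0 on Σ_A − cone(S) satisfies f ≥ 0 on (Σ_A + I + I*) ∩ A_h. (Statement (2) is the dual form of the assertion that all four sets in (1) have the same closure in the finest locally convex topology on A_h.) -/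

import Mathlib

noncomputable section

/-- `Σ_A`: the set of finite sums of elements `a*a`. -/
def SigmaSet (A : Type) [Ring A] [StarRing A] : Set A :=
  {s | ∃ (r : ℕ) (b : Fin r → A), s = ∑ i, star (b i) * b i}

lemma sigma_star {A : Type} [Ring A] [StarRing A] {s : A} (hs : s ∈ SigmaSet A) :
    star s = s := by
  obtain ⟨r, b, rfl⟩ := hs
  rw [star_sum]
  exact Finset.sum_congr rfl fun i _ => by rw [star_mul, star_star]

/-- Chain of inclusions `Σ_A − cone(S) ⊆ Σ_A − Σ_I ⊆ Σ_A + (I ∩ A_h) ⊆ (Σ_A + I + I*) ∩ A_h`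
for the left ideal `I` generated by `{p_λ}`, `S = {p_λ* p_λ}`; and its dual consequence:
these four sets have the same closure, i.e. every hermitian linear functional nonnegative on
the first set is nonnegative on the last one. -/
theorem stmt15 (A : Type) [Ring A] [Algebra ℝ A] [StarRing A] [StarModule ℝ A]
    (Λ : Type) (p : Λ → A)
    (I : Submodule A A) (hI : I = Submodule.span A (Set.range p)) :
    ({x : A | ∃ s ∈ SigmaSet A,
        ∃ t ∈ {t : A | ∃ (r : ℕ) (c : Fin r → ℝ) (l : Fin r → Λ),
          (∀ i, 0 ≤ c i) ∧ t = ∑ i, c i • (star (p (l i)) * p (l i))},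
        x = s - t} ⊆
      {x : A | ∃ s ∈ SigmaSet A,
        ∃ t ∈ {t : A | ∃ (r : ℕ) (u : Fin r → A), (∀ i, u i ∈ I) ∧
          t = ∑ i, star (u i) * u i},
        x = s - t}) ∧
    ({x : A | ∃ s ∈ SigmaSet A,
        ∃ t ∈ {t : A | ∃ (r : ℕ) (u : Fin r → A), (∀ i, u i ∈ I) ∧
          t = ∑ i, star (u i) * u i},
        x = s - t} ⊆
      {x : A | ∃ s ∈ SigmaSet A, ∃ u ∈ I, star u = u ∧ x = s + u}) ∧
    ({x : A | ∃ s ∈ SigmaSet A, ∃ u ∈ I, star u = u ∧ x = s + u} ⊆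
      {x : A | star x = x ∧ ∃ s ∈ SigmaSet A, ∃ u ∈ I, ∃ w ∈ I, x = s + u + star w}) ∧
    (∀ f : A →ₗ[ℝ] ℝ, (∀ b : A, f (star b) = f b) →
      (∀ x ∈ {x : A | ∃ s ∈ SigmaSet A,
          ∃ t ∈ {t : A | ∃ (r : ℕ) (c : Fin r → ℝ) (l : Fin r → Λ),
            (∀ i, 0 ≤ c i) ∧ t = ∑ i, c i • (star (p (l i)) * p (l i))},
          x = s - t}, 0 ≤ f x) →
      ∀ x ∈ {x : A | star x = x ∧
          ∃ s ∈ SigmaSet A, ∃ u ∈ I, ∃ w ∈ I, x = s + u + star w},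
        0 ≤ f x) := by
  subst hI
  refine ⟨?_, ?_, ?_, ?_⟩
  · -- inclusion 1
    rintro x ⟨s, hs, t, ⟨r, c, l, hc, rfl⟩, rfl⟩
    refine ⟨s, hs, _, ⟨r, fun i => Real.sqrt (c i) • p (l i), fun i => ?_, ?_⟩, rfl⟩
    · show Real.sqrt (c i) • p (l i) ∈ _
      rw [algebra_compatible_smul A]
      exact Submodule.smul_mem _ _ (Submodule.subset_span ⟨l i, rfl⟩)
    · refine Finset.sum_congr rfl fun i _ => ?_
      simp only [star_smul, star_trivial, smul_mul_smul_comm, Real.mul_self_sqrt (hc i)]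
  · -- inclusion 2
    rintro x ⟨s, hs, t, ⟨r, u, hu, rfl⟩, rfl⟩
    refine ⟨s, hs, -∑ i, star (u i) * u i, ?_, ?_, by rw [sub_eq_add_neg]⟩
    · exact neg_mem (Submodule.sum_mem _ fun i _ => by
        simpa [smul_eq_mul] using Submodule.smul_mem _ (star (u i)) (hu i))
    · rw [star_neg, star_sum]
      congr 1
      exact Finset.sum_congr rfl fun i _ => by rw [star_mul, star_star]
  · -- inclusion 3
    rintro x ⟨s, hs, u, hu, hust, rfl⟩
    refine ⟨?_, s, hs, u, hu, 0, Submodule.zero_mem _, by simp⟩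
    rw [star_add, sigma_star hs, hust]
  · -- dual statement
    intro f hf h0 x hx
    obtain ⟨hxstar, s, hs, u, hu, w, hw, rfl⟩ := hx
    have hzero : (0 : A) ∈ SigmaSet A := ⟨0, Fin.elim0, by simp⟩
    have hSig : ∀ s ∈ SigmaSet A, 0 ≤ f s := by
      intro s hs
      have := h0 (s - 0) ⟨s, hs, 0, ⟨0, Fin.elim0, Fin.elim0, fun i => i.elim0, by simp⟩, rfl⟩
      simpa using this
    have hsq : ∀ a : A, 0 ≤ f (star a * a) := fun a => hSig _ ⟨1, fun _ => a, by simp⟩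
    have hpp : ∀ lam, f (star (p lam) * p lam) = 0 := by
      intro lam
      have h1 : 0 ≤ f (star (p lam) * p lam) := hsq _
      have h2 : 0 ≤ f (0 - star (p lam) * p lam) :=
        h0 _ ⟨0, hzero, star (p lam) * p lam,
          ⟨1, fun _ => 1, fun _ => lam, fun _ => zero_le_one, by simp⟩, rfl⟩
      simp only [zero_sub, map_neg] at h2
      linarith
    have key : ∀ (a : A) (lam : Λ), f (a * p lam) = 0 := by
      intro a lam
      by_contra hne
      set B := f (a * p lam) with hB
      set C := f (a * star a) with hC
      set t : ℝ := -(C + 1) / (2 * B) with ht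
      have expand : star (star a + t • p lam) * (star a + t • p lam)
          = a * star a + t • (a * p lam) + t • (star (p lam) * star a)
            + (t * t) • (star (p lam) * p lam) := by
        simp only [star_add, star_smul, star_star, star_trivial, add_mul, mul_add, smul_add,
          smul_mul_assoc, mul_smul_comm, smul_smul]
        abel
      have hge : 0 ≤ f (star (star a + t • p lam) * (star a + t • p lam)) := hsq _
      rw [expand] at hge
      have hsymm : f (star (p lam) * star a) = B := by
        rw [← star_mul, hf]
      simp only [map_add, map_smul, smul_eq_mul, hsymm, hpp lam, ← hC, ← hB] at hge
      have h2tB : t * B = -(C + 1) / 2 := by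
        rw [ht]
        field_simp
      rw [h2tB] at hge
      linarith
    have hI0 : ∀ v ∈ Submodule.span A (Set.range p), ∀ a : A, f (a * v) = 0 := by
      intro v hv
      induction hv using Submodule.span_induction with
      | mem x hx => obtain ⟨lam, rfl⟩ := hx; exact fun a => key a lam
      | zero => intro a; simp
      | add x y _ _ hx hy => intro a; rw [mul_add, map_add, hx a, hy a, add_zero]
      | smul c x _ hx => intro a; rw [smul_eq_mul, ← mul_assoc]; exact hx (a * c)
    have hfu : f u = 0 := by
      have := hI0 u hu 1; rwa [one_mul] at this
    have hfw : f (star w) = 0 := by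
      rw [hf]
      have := hI0 w hw 1; rwa [one_mul] at this
    have := hSig s hs
    simp only [map_add, hfu, hfw, add_zero]
    linarith

end
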